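/- Let v = (v₁, v₂, v₃) ∈ ℝ³, φ ∈ [0, π], and c ≥ 0. Set a₁ := v₁ cos φ + v₂ sin φ and assume a₁ ≥ 0 and (a₁, v₃) ≠ (0, 0). Let r := √(a₁² + v₃²), a₂ := arccos(v₃/r) ∈ [0, π], c̄ := min{1, c/r}, a₃ := arccos(−c̄), a₄ := arccos(c̄). Then for every θ ∈ [0, π], with b(θ) := (sin θ cos φ, sin θ sin φ, cos θ), one has |⟨v, b(θ)⟩| ≤ c if and only if θ ∈ [a₂ − a₃, a₂ − a₄] ∪ [a₂ + a₄, a₂ + a₃]. -/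

import Mathlib

open Real RealInnerProductSpace

/-- **Interval characterization for axis consensus.** With `b(θ)` the unit vector of
spherical angles `(θ, φ)`, the constraint `|⟨v, b(θ)⟩| ≤ c` on `θ ∈ [0, π]` holds exactly on
the union of the two closed intervals `[a₂ − a₃, a₂ − a₄]` and `[a₂ + a₄, a₂ + a₃]`. -/
theorem axis_constraint_interval_characterization
    (v : EuclideanSpace ℝ (Fin 3)) (φ : ℝ) (hφ0 : 0 ≤ φ) (hφπ : φ ≤ π)
    (c : ℝ) (hc : 0 ≤ c)
    (a₁ : ℝ) (ha₁def : a₁ = v 0 * Real.cos φ + v 1 * Real.sin φ)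
    (ha₁ : 0 ≤ a₁) (hne : ¬(a₁ = 0 ∧ v 2 = 0))
    (r : ℝ) (hr : r = Real.sqrt (a₁ ^ 2 + (v 2) ^ 2))
    (a₂ : ℝ) (ha₂ : a₂ = Real.arccos (v 2 / r))
    (cbar : ℝ) (hcbar : cbar = min 1 (c / r))
    (a₃ : ℝ) (ha₃ : a₃ = Real.arccos (-cbar))
    (a₄ : ℝ) (ha₄ : a₄ = Real.arccos cbar) :
    ∀ θ : ℝ, 0 ≤ θ → θ ≤ π →
      (|⟪v, (WithLp.toLp 2 ![Real.sin θ * Real.cos φ, Real.sin θ * Real.sin φ, Real.cos θ] :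
          EuclideanSpace ℝ (Fin 3))⟫| ≤ c ↔
        (a₂ - a₃ ≤ θ ∧ θ ≤ a₂ - a₄) ∨ (a₂ + a₄ ≤ θ ∧ θ ≤ a₂ + a₃)) := by
  intro θ hθ0 hθπ
  -- basic facts about r
  have hsum : 0 < a₁ ^ 2 + (v 2) ^ 2 := by
    rcases lt_or_eq_of_le (sq_nonneg a₁) with h | h
    · nlinarith [sq_nonneg (v 2)]
    · rcases lt_or_eq_of_le (sq_nonneg (v 2)) with h2 | h2
      · nlinarith
      · exfalso; exact hne ⟨by nlinarith, by nlinarith⟩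
  have hrpos : 0 < r := hr ▸ Real.sqrt_pos.mpr hsum
  have hr2 : r ^ 2 = a₁ ^ 2 + (v 2) ^ 2 := by rw [hr]; exact Real.sq_sqrt hsum.le
  have hv2r : |v 2 / r| ≤ 1 := by
    rw [abs_div, abs_of_pos hrpos, div_le_one hrpos]
    have : (v 2)^2 ≤ r^2 := by nlinarith [sq_nonneg a₁]
    nlinarith [abs_nonneg (v 2), sq_abs (v 2)]
  have hv2r' := abs_le.mp hv2r
  -- cbar facts
  have hcbar0 : 0 ≤ cbar := by
    rw [hcbar]; exact le_min one_pos.le (div_nonneg hc hrpos.le)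
  have hcbar1 : cbar ≤ 1 := by rw [hcbar]; exact min_le_left _ _
  have hcos4 : Real.cos a₄ = cbar := by
    rw [ha₄]; exact Real.cos_arccos (by linarith) hcbar1
  have hcos3 : Real.cos a₃ = -cbar := by
    rw [ha₃]; exact Real.cos_arccos (by linarith) (by linarith)
  have ha₄mem : a₄ ∈ Set.Icc 0 π := by
    rw [ha₄]; exact ⟨Real.arccos_nonneg _, Real.arccos_le_pi _⟩
  have ha₃mem : a₃ ∈ Set.Icc 0 π := by
    rw [ha₃]; exact ⟨Real.arccos_nonneg _, Real.arccos_le_pi _⟩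
  -- a₂ facts
  have hcos2 : Real.cos a₂ = v 2 / r := by
    rw [ha₂]; exact Real.cos_arccos hv2r'.1 hv2r'.2
  have hsin2 : Real.sin a₂ = a₁ / r := by
    rw [ha₂, Real.sin_arccos]
    have h1 : 1 - (v 2 / r) ^ 2 = (a₁ / r) ^ 2 := by
      field_simp
      nlinarith
    rw [h1, Real.sqrt_sq (div_nonneg ha₁ hrpos.le)]
  have ha₂mem : a₂ ∈ Set.Icc 0 π := by
    rw [ha₂]; exact ⟨Real.arccos_nonneg _, Real.arccos_le_pi _⟩
  -- inner product = r * cos (θ - a₂)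
  have hinner : ⟪v, (WithLp.toLp 2 ![Real.sin θ * Real.cos φ, Real.sin θ * Real.sin φ, Real.cos θ] :
      EuclideanSpace ℝ (Fin 3))⟫ = r * Real.cos (θ - a₂) := by
    simp only [PiLp.inner_apply, Fin.sum_univ_three, RCLike.inner_apply, conj_trivial]
    show (Real.sin θ * Real.cos φ) * v 0 + (Real.sin θ * Real.sin φ) * v 1
        + Real.cos θ * v 2 = _
    rw [Real.cos_sub]
    have : (Real.sin θ * Real.cos φ) * v 0 + (Real.sin θ * Real.sin φ) * v 1
        + Real.cos θ * v 2 = a₁ * Real.sin θ + v 2 * Real.cos θ := by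
      rw [ha₁def]; ring
    rw [this]
    have h1 : a₁ = r * Real.sin a₂ := by rw [hsin2]; field_simp
    have h2 : v 2 = r * Real.cos a₂ := by rw [hcos2]; field_simp
    rw [h1, h2]; ring
  rw [hinner, abs_mul, abs_of_pos hrpos]
  -- reduce to |cos (θ - a₂)| ≤ cbar
  have hstep1 : r * |Real.cos (θ - a₂)| ≤ c ↔ |Real.cos (θ - a₂)| ≤ cbar := by
    rw [hcbar, le_min_iff]
    constructor
    · intro h
      exact ⟨Real.abs_cos_le_one _, (le_div_iff₀ hrpos).mpr (by linarith [mul_comm r |Real.cos (θ - a₂)|])⟩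
    · intro ⟨_, h⟩
      have := (le_div_iff₀ hrpos).mp h
      linarith [mul_comm r |Real.cos (θ - a₂)|]
  rw [hstep1]
  -- set x := θ - a₂, with |x| ≤ π
  set x := θ - a₂ with hx
  have hxabs : |x| ≤ π := by
    rw [abs_le]; constructor <;> [linarith [ha₂mem.2]; linarith [ha₂mem.1]]
  have habsmem : |x| ∈ Set.Icc 0 π := ⟨abs_nonneg _, hxabs⟩
  have key : |Real.cos x| ≤ cbar ↔ a₄ ≤ |x| ∧ |x| ≤ a₃ := by
    rw [abs_le, ← Real.cos_abs x]
    constructor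
    · rintro ⟨h1, h2⟩
      constructor
      · by_contra h
        push_neg at h
        have := Real.strictAntiOn_cos habsmem ha₄mem h
        rw [hcos4] at this; linarith
      · by_contra h
        push_neg at h
        have := Real.strictAntiOn_cos ha₃mem habsmem h
        rw [hcos3] at this; linarith
    · rintro ⟨h1, h2⟩
      constructor
      · rw [← hcos3]
        exact (Real.strictAntiOn_cos.antitoneOn habsmem ha₃mem h2)
      · rw [← hcos4]
        exact (Real.strictAntiOn_cos.antitoneOn ha₄mem habsmem h1)
  rw [key]
  -- translate |x| conditions into the two intervals
  constructor
  · rintro ⟨h1, h2⟩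
    rcases abs_cases x with ⟨he, _⟩ | ⟨he, _⟩
    · right
      rw [he] at h1 h2
      exact ⟨by linarith, by linarith⟩
    · left
      rw [he] at h1 h2
      exact ⟨by linarith, by linarith⟩
  · rintro (⟨h1, h2⟩ | ⟨h1, h2⟩)
    · have h3 : a₄ ≤ -x := by simp only [hx]; linarith
      have h4 : -a₃ ≤ x := by simp only [hx]; linarith
      refine ⟨le_abs.mpr (Or.inr h3), abs_le.mpr ⟨h4, ?_⟩⟩
      have := ha₄mem.1
      linarith
    · have hxpos : a₄ ≤ x := by simp only [hx]; linarith
      have h3 : x ≤ a₃ := by simp only [hx]; linarith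
      refine ⟨le_abs.mpr (Or.inl hxpos), abs_le.mpr ⟨?_, h3⟩⟩
      have := ha₄mem.1
      have := ha₃mem.1
      linarith
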